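/- Let k ≥ 2, let f be holomorphic on the upper half-plane, and fix τ₀, τ₁ ∈ ℍ. Define the period cocycle p(γ) ∈ ℂ[X]_{≤ k-2} by p(γ) = ∫_{γ^{-1}τ₀}^{τ₀} f(ξ)(X-ξ)^{k-2} dξ for γ in a subgroup G of SL₂(ℤ) under which f is weight-k invariant (f((aτ+b)/(cτ+d)) = (cτ+d)^k f(τ)). Then p satisfies the cocycle relation p(γ₁γ₂) = p(γ₁)|_{γ₂} + p(γ₂), where P(X)|_γ = (cX+d)^{k-2}P((aX+b)/(cX+d)); moreover, the cocycles attached to the two base points τ₀ and τ₁ differ by the coboundary γ ↦ Q|_γ - Q with Q(X) = ∫_{τ₁}^{τ₀} f(ξ)(X-ξ)^{k-2} dξ. -/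

import Mathlib

open Complex Real

/-- Line integral of `f` along the straight segment from `a` to `b` in `ℂ`. -/
noncomputable def lineInt (f : ℂ → ℂ) (a b : ℂ) : ℂ :=
  ∫ t in (0 : ℝ)..1, (b - a) * f ((1 - (t : ℂ)) * a + (t : ℂ) * b)

/-- Möbius action of `γ ∈ SL₂(ℤ)` on `ℂ`. -/
noncomputable def moeb (γ : Matrix.SpecialLinearGroup (Fin 2) ℤ) (z : ℂ) : ℂ :=
  (((γ : Matrix (Fin 2) (Fin 2) ℤ) 0 0 : ℂ) * z + ((γ : Matrix (Fin 2) (Fin 2) ℤ) 0 1 : ℂ)) /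
    (((γ : Matrix (Fin 2) (Fin 2) ℤ) 1 0 : ℂ) * z + ((γ : Matrix (Fin 2) (Fin 2) ℤ) 1 1 : ℂ))

/-- The period function `p^{τ₀}(γ)(X) = ∫_{γ⁻¹τ₀}^{τ₀} f(ξ)(X-ξ)^{k-2} dξ` (as a
polynomial function of `X`). -/
noncomputable def periodCocycle (k : ℕ) (f : ℂ → ℂ) (τ₀ : ℂ)
    (γ : Matrix.SpecialLinearGroup (Fin 2) ℤ) (X : ℂ) : ℂ :=
  lineInt (fun ξ => f ξ * (X - ξ) ^ (k - 2)) (moeb γ⁻¹ τ₀) τ₀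


section Aux
open MeasureTheory intervalIntegral
open scoped Interval

-- abbreviation for denominator
noncomputable def dC (γ : Matrix.SpecialLinearGroup (Fin 2) ℤ) (z : ℂ) : ℂ :=
  ((γ : Matrix (Fin 2) (Fin 2) ℤ) 1 0 : ℂ) * z + ((γ : Matrix (Fin 2) (Fin 2) ℤ) 1 1 : ℂ)

lemma det_entries (γ : Matrix.SpecialLinearGroup (Fin 2) ℤ) :
    ((γ : Matrix (Fin 2) (Fin 2) ℤ) 0 0 : ℂ) * ((γ : Matrix (Fin 2) (Fin 2) ℤ) 1 1 : ℂ)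
      - ((γ : Matrix (Fin 2) (Fin 2) ℤ) 0 1 : ℂ) * ((γ : Matrix (Fin 2) (Fin 2) ℤ) 1 0 : ℂ) = 1 := by
  have h := γ.2
  rw [Matrix.det_fin_two] at h
  have : (((γ : Matrix (Fin 2) (Fin 2) ℤ) 0 0 * (γ : Matrix (Fin 2) (Fin 2) ℤ) 1 1
      - (γ : Matrix (Fin 2) (Fin 2) ℤ) 0 1 * (γ : Matrix (Fin 2) (Fin 2) ℤ) 1 0 : ℤ) : ℂ) = ((1:ℤ):ℂ) := by
    rw [h]
  push_cast at this
  linear_combination this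

lemma dC_ne_zero (γ : Matrix.SpecialLinearGroup (Fin 2) ℤ) (z : ℂ) (hz : 0 < z.im) :
    dC γ z ≠ 0 := by
  intro h
  have him : ((γ : Matrix (Fin 2) (Fin 2) ℤ) 1 0 : ℝ) * z.im = 0 := by
    simpa [dC] using congrArg Complex.im h
  have hc : ((γ : Matrix (Fin 2) (Fin 2) ℤ) 1 0 : ℂ) = 0 := by
    rcases mul_eq_zero.1 him with h1 | h1
    · exact_mod_cast h1
    · exact absurd h1 hz.ne'
  have hd : ((γ : Matrix (Fin 2) (Fin 2) ℤ) 1 1 : ℂ) = 0 := by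
    have h2 := h
    rw [dC, hc] at h2
    simpa using h2
  have hdet := det_entries γ
  rw [hd, hc] at hdet
  simp at hdet

lemma moeb_eq_smul (γ : Matrix.SpecialLinearGroup (Fin 2) ℤ) (z : UpperHalfPlane) :
    moeb γ (z : ℂ) = ((γ • z : UpperHalfPlane) : ℂ) := by
  rw [UpperHalfPlane.specialLinearGroup_apply]
  simp [moeb, UpperHalfPlane.coe_mk]

lemma moeb_im_pos (γ : Matrix.SpecialLinearGroup (Fin 2) ℤ) (z : ℂ) (hz : 0 < z.im) :
    0 < (moeb γ z).im := by
  have := moeb_eq_smul γ ⟨z, hz⟩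
  rw [UpperHalfPlane.coe_mk_subtype] at this
  rw [this]
  exact UpperHalfPlane.im_pos _

lemma moeb_mul (γ₁ γ₂ : Matrix.SpecialLinearGroup (Fin 2) ℤ) (z : ℂ) (hz : 0 < z.im) :
    moeb (γ₁ * γ₂) z = moeb γ₁ (moeb γ₂ z) := by
  have h2 := moeb_eq_smul γ₂ ⟨z, hz⟩
  have h12 := moeb_eq_smul (γ₁ * γ₂) ⟨z, hz⟩
  have h1 := moeb_eq_smul γ₁ (γ₂ • ⟨z, hz⟩)
  rw [UpperHalfPlane.coe_mk_subtype] at h2 h12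
  rw [h12, mul_smul, ← h1, ← h2]

-- entries of the inverse
lemma inv_entries (γ : Matrix.SpecialLinearGroup (Fin 2) ℤ) :
    ((γ⁻¹ : Matrix.SpecialLinearGroup (Fin 2) ℤ) : Matrix (Fin 2) (Fin 2) ℤ) 0 0 = (γ : Matrix (Fin 2) (Fin 2) ℤ) 1 1 ∧
    ((γ⁻¹ : Matrix.SpecialLinearGroup (Fin 2) ℤ) : Matrix (Fin 2) (Fin 2) ℤ) 0 1 = -(γ : Matrix (Fin 2) (Fin 2) ℤ) 0 1 ∧
    ((γ⁻¹ : Matrix.SpecialLinearGroup (Fin 2) ℤ) : Matrix (Fin 2) (Fin 2) ℤ) 1 0 = -(γ : Matrix (Fin 2) (Fin 2) ℤ) 1 0 ∧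
    ((γ⁻¹ : Matrix.SpecialLinearGroup (Fin 2) ℤ) : Matrix (Fin 2) (Fin 2) ℤ) 1 1 = (γ : Matrix (Fin 2) (Fin 2) ℤ) 0 0 := by
  rw [Matrix.SpecialLinearGroup.SL2_inv_expl γ]
  refine ⟨rfl, rfl, rfl, rfl⟩

lemma hasDerivAt_moeb (γ : Matrix.SpecialLinearGroup (Fin 2) ℤ) (z : ℂ) (hz : dC γ z ≠ 0) :
    HasDerivAt (moeb γ) (1 / (dC γ z)^2) z := by
  set a := ((γ : Matrix (Fin 2) (Fin 2) ℤ) 0 0 : ℂ) with ha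
  set b := ((γ : Matrix (Fin 2) (Fin 2) ℤ) 0 1 : ℂ) with hb
  set c := ((γ : Matrix (Fin 2) (Fin 2) ℤ) 1 0 : ℂ) with hc
  set d := ((γ : Matrix (Fin 2) (Fin 2) ℤ) 1 1 : ℂ) with hd
  have hz' : c * z + d ≠ 0 := by simpa [dC, ← ha, ← hb, ← hc, ← hd] using hz
  have hnum : HasDerivAt (fun w : ℂ => a * w + b) a z := by
    have h1 := ((hasDerivAt_id z).const_mul a).add_const b
    simp only [mul_one] at h1
    exact h1
  have hden : HasDerivAt (fun w : ℂ => c * w + d) c z := by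
    have h1 := ((hasDerivAt_id z).const_mul c).add_const d
    simp only [mul_one] at h1
    exact h1
  have h := hnum.div hden hz'
  have heq : (a * (c * z + d) - (a * z + b) * c) / (c * z + d)^2 = 1 / (dC γ z)^2 := by
    have hdet := det_entries γ
    rw [← ha, ← hb, ← hc, ← hd] at hdet
    have : dC γ z = c * z + d := rfl
    rw [this]
    field_simp
    linear_combination hdet
  rw [heq] at h
  have hm : moeb γ = fun w : ℂ => (a * w + b) / (c * w + d) := rfl
  rw [hm]
  exact h

-- key pointwise algebraic identity
lemma alg_id (k : ℕ) (hk : 2 ≤ k) (f : ℂ → ℂ) (γ : Matrix.SpecialLinearGroup (Fin 2) ℤ)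
    (X w : ℂ) (hX : dC γ X ≠ 0) (hw : dC γ⁻¹ w ≠ 0)
    (hfw : f (moeb γ⁻¹ w) = (dC γ⁻¹ w) ^ k * f w) :
    f (moeb γ⁻¹ w) * (X - moeb γ⁻¹ w) ^ (k - 2) * (1 / (dC γ⁻¹ w)^2)
      = (dC γ X) ^ (k - 2) * (f w * (moeb γ X - w) ^ (k - 2)) := by
  obtain ⟨e00, e01, e10, e11⟩ := inv_entries γ
  set a := ((γ : Matrix (Fin 2) (Fin 2) ℤ) 0 0 : ℂ) with ha
  set b := ((γ : Matrix (Fin 2) (Fin 2) ℤ) 0 1 : ℂ) with hb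
  set c := ((γ : Matrix (Fin 2) (Fin 2) ℤ) 1 0 : ℂ) with hc
  set d := ((γ : Matrix (Fin 2) (Fin 2) ℤ) 1 1 : ℂ) with hd
  have hwd : dC γ⁻¹ w = -c * w + a := by
    show ((γ⁻¹ : Matrix.SpecialLinearGroup (Fin 2) ℤ) : Matrix (Fin 2) (Fin 2) ℤ) 1 0 * w
        + ((γ⁻¹ : Matrix.SpecialLinearGroup (Fin 2) ℤ) : Matrix (Fin 2) (Fin 2) ℤ) 1 1 = _
    rw [e10, e11]; push_cast; ring
  have hu : (-c * w + a) ≠ 0 := hwd ▸ hw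
  have hXd : dC γ X = c * X + d := rfl
  have hmw : moeb γ⁻¹ w = (d * w - b) / (-c * w + a) := by
    show (((γ⁻¹ : Matrix.SpecialLinearGroup (Fin 2) ℤ) : Matrix (Fin 2) (Fin 2) ℤ) 0 0 * w
        + ((γ⁻¹ : Matrix.SpecialLinearGroup (Fin 2) ℤ) : Matrix (Fin 2) (Fin 2) ℤ) 0 1) /
        (((γ⁻¹ : Matrix.SpecialLinearGroup (Fin 2) ℤ) : Matrix (Fin 2) (Fin 2) ℤ) 1 0 * w
        + ((γ⁻¹ : Matrix.SpecialLinearGroup (Fin 2) ℤ) : Matrix (Fin 2) (Fin 2) ℤ) 1 1) = _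
    rw [e00, e01, e10, e11]; push_cast; rw [ha, hb, hc, hd]; ring
  have hmX : dC γ X * (moeb γ X - w) = (a * X + b) - (c * X + d) * w := by
    have : moeb γ X = (a * X + b) / (c * X + d) := rfl
    rw [this, hXd]
    rw [hXd] at hX
    field_simp
  have hmw2 : moeb γ⁻¹ w * (-c * w + a) = d * w - b := by
    rw [hmw]; exact div_mul_cancel₀ _ hu
  have key : X - moeb γ⁻¹ w = (dC γ X) * (moeb γ X - w) / (-c * w + a) := by
    rw [eq_div_iff hu, hmX, sub_mul, hmw2]; ring
  rw [hfw, hwd, key, div_pow, mul_pow]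
  set u := -c * w + a with hu'
  have hpow : u ^ k = u ^ (k - 2) * u ^ 2 := by rw [← pow_add]; congr 1; omega
  rw [hpow]
  field_simp

lemma slice_horiz (g : ℂ → ℂ) (hgc : ContinuousOn g {z : ℂ | 0 < z.im})
    (y : ℝ) (hy : 0 < y) (x₁ x₂ : ℝ) :
    IntervalIntegrable (fun x : ℝ => g (x + y * Complex.I)) volume x₁ x₂ := by
  apply ContinuousOn.intervalIntegrable
  apply hgc.comp ((Continuous.continuousOn (by continuity)))
  intro x _
  simp [hy]

lemma slice_vert (g : ℂ → ℂ) (hgc : ContinuousOn g {z : ℂ | 0 < z.im})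
    (x : ℝ) (y₁ y₂ : ℝ) (h₁ : 0 < y₁) (h₂ : 0 < y₂) :
    IntervalIntegrable (fun y : ℝ => g (x + y * Complex.I)) volume y₁ y₂ := by
  apply ContinuousOn.intervalIntegrable
  apply hgc.comp ((Continuous.continuousOn (by continuity)))
  intro y hy
  have : 0 < y := lt_of_lt_of_le (lt_min h₁ h₂) (Set.mem_uIcc.mp hy |> fun h => by
    rcases h with ⟨h1, _⟩ | ⟨h1, _⟩ <;> [exact le_trans (min_le_left _ _) h1;
      exact le_trans (min_le_right _ _) h1])
  simp [this]

lemma sq_bound {a b x : ℝ} (h1 : min a b ≤ x) (h2 : x ≤ max a b) : (x - a)^2 ≤ (b - a)^2 := by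
  rcases le_total a b with h | h
  · rw [min_eq_left h, max_eq_right h] at * ; nlinarith
  · rw [min_eq_right h, max_eq_left h] at * ; nlinarith

lemma dist_le_of_sq (z w p : ℂ) (h1 : (p.re - z.re)^2 ≤ (w.re - z.re)^2)
    (h2 : (p.im - z.im)^2 ≤ (w.im - z.im)^2) : dist p z ≤ dist w z := by
  rw [Complex.dist_eq, Complex.dist_eq, Complex.norm_def, Complex.norm_def]
  apply Real.sqrt_le_sqrt
  simp only [Complex.normSq_apply, Complex.sub_re, Complex.sub_im]
  nlinarith [h1, h2]

theorem exists_primitive (g : ℂ → ℂ) (hg : DifferentiableOn ℂ g {z : ℂ | 0 < z.im}) :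
    ∃ F : ℂ → ℂ, ∀ z : ℂ, 0 < z.im → HasDerivAt F (g z) z := by
  have hU : IsOpen {z : ℂ | 0 < z.im} := by
    have : {z : ℂ | 0 < z.im} = Complex.im ⁻¹' (Set.Ioi 0) := rfl
    rw [this]; exact isOpen_Ioi.preimage Complex.continuous_im
  have hgc : ContinuousOn g {z : ℂ | 0 < z.im} := hg.continuousOn
  refine ⟨fun z => (∫ x : ℝ in (0:ℝ)..z.re, g (x + (1:ℝ) * Complex.I))
      + Complex.I * ∫ y : ℝ in (1:ℝ)..z.im, g (z.re + y * Complex.I), ?_⟩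
  intro z hz
  set F : ℂ → ℂ := fun z => (∫ x : ℝ in (0:ℝ)..z.re, g (x + (1:ℝ) * Complex.I))
      + Complex.I * ∫ y : ℝ in (1:ℝ)..z.im, g (z.re + y * Complex.I) with hF
  -- key rectangle identity
  have hkey : ∀ w : ℂ, 0 < w.im →
      F w - F z = (∫ x : ℝ in z.re..w.re, g (x + z.im * Complex.I))
        + Complex.I * ∫ y : ℝ in z.im..w.im, g (w.re + y * Complex.I) := by
    intro w hw
    have hdiff : DifferentiableOn ℂ g
        ([[(Complex.mk z.re 1).re, (Complex.mk w.re z.im).re]] ×ℂ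
          [[(Complex.mk z.re 1).im, (Complex.mk w.re z.im).im]]) := by
      apply hg.mono
      intro p hp
      rw [Complex.mem_reProdIm] at hp
      have h2 : min (Complex.mk z.re 1).im (Complex.mk w.re z.im).im ≤ p.im := by
        rcases Set.mem_uIcc.mp hp.2 with ⟨h1, _⟩ | ⟨h1, _⟩
        · exact le_trans (min_le_left _ _) h1
        · exact le_trans (min_le_right _ _) h1
      have h01 : (0:ℝ) < min (Complex.mk z.re 1).im (Complex.mk w.re z.im).im := by
        show (0:ℝ) < min 1 z.im
        exact lt_min one_pos hz
      exact lt_of_lt_of_le h01 h2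
    have rect := Complex.integral_boundary_rect_eq_zero_of_differentiableOn g
        (Complex.mk z.re 1) (Complex.mk w.re z.im) hdiff
    have h1 : (Complex.mk z.re 1).re = z.re := rfl
    have h2 : (Complex.mk z.re 1).im = (1:ℝ) := rfl
    have h3 : (Complex.mk w.re z.im).re = w.re := rfl
    have h4 : (Complex.mk w.re z.im).im = z.im := rfl
    rw [h1, h2, h3, h4] at rect
    simp only [smul_eq_mul] at rect
    -- split the vertical integral from 1 to w.im at z.im
    have hsplit : (∫ y : ℝ in (1:ℝ)..w.im, g (w.re + y * Complex.I))
        = (∫ y : ℝ in (1:ℝ)..z.im, g (w.re + y * Complex.I))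
          + ∫ y : ℝ in z.im..w.im, g (w.re + y * Complex.I) :=
      (integral_add_adjacent_intervals (slice_vert g hgc _ _ _ one_pos hz)
        (slice_vert g hgc _ _ _ hz hw)).symm
    have hhor : (∫ x : ℝ in (0:ℝ)..w.re, g (x + (1:ℝ) * Complex.I))
        - (∫ x : ℝ in (0:ℝ)..z.re, g (x + (1:ℝ) * Complex.I))
        = ∫ x : ℝ in z.re..w.re, g (x + (1:ℝ) * Complex.I) :=
      integral_interval_sub_left (slice_horiz g hgc _ one_pos _ _)
        (slice_horiz g hgc _ one_pos _ _)
    simp only [hF]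
    linear_combination hhor + Complex.I * hsplit + rect
  -- now the derivative estimate
  rw [hasDerivAt_iff_isLittleO, Asymptotics.isLittleO_iff]
  intro c hc
  have hca : ContinuousAt g z := (hg.differentiableAt (hU.mem_nhds hz)).continuousAt
  have hev : ∀ᶠ w in nhds z, ‖g w - g z‖ ≤ c/2 := by
    have h2 := hca (Metric.closedBall_mem_nhds (g z) (by positivity : (0:ℝ) < c/2))
    filter_upwards [h2] with w hw
    simpa [Metric.mem_closedBall, dist_eq_norm] using hw
  obtain ⟨δ₁, hδ₁, h1⟩ := Metric.eventually_nhds_iff.mp hev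
  obtain ⟨δ₂, hδ₂, h2⟩ := Metric.isOpen_iff.mp hU z hz
  have hδ : 0 < min δ₁ δ₂ := lt_min hδ₁ hδ₂
  filter_upwards [Metric.ball_mem_nhds z hδ] with w hwball
  have hwz : dist w z < min δ₁ δ₂ := Metric.mem_ball.mp hwball
  have hwU : w ∈ {z : ℂ | 0 < z.im} := h2 (Metric.mem_ball.mpr (lt_of_lt_of_le hwz (min_le_right _ _)))
  have hwim : 0 < w.im := hwU
  have hz' := Complex.re_add_im z
  have hw' := Complex.re_add_im w
  -- good points: ∀ p with componentwise closer to z than w, ‖g p - g z‖ ≤ c/2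
  have hgood : ∀ p : ℂ, (p.re - z.re)^2 ≤ (w.re - z.re)^2 → (p.im - z.im)^2 ≤ (w.im - z.im)^2 →
      ‖g p - g z‖ ≤ c/2 := by
    intro p hp1 hp2
    apply h1
    calc dist p z ≤ dist w z := dist_le_of_sq z w p hp1 hp2
    _ < δ₁ := lt_of_lt_of_le hwz (min_le_left _ _)
  have hsub1 : (∫ x : ℝ in z.re..w.re, (g (x + z.im * Complex.I) - g z))
      = (∫ x : ℝ in z.re..w.re, g (x + z.im * Complex.I)) - ((w.re : ℂ) - (z.re : ℂ)) * g z := by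
    rw [intervalIntegral.integral_sub (slice_horiz g hgc _ hz _ _) intervalIntegrable_const,
      intervalIntegral.integral_const, Complex.real_smul]
    push_cast
    ring
  have hsub2 : (∫ y : ℝ in z.im..w.im, (g (w.re + y * Complex.I) - g z))
      = (∫ y : ℝ in z.im..w.im, g (w.re + y * Complex.I)) - ((w.im : ℂ) - (z.im : ℂ)) * g z := by
    rw [intervalIntegral.integral_sub (slice_vert g hgc _ _ _ hz hwim) intervalIntegrable_const,
      intervalIntegral.integral_const, Complex.real_smul]
    push_cast
    ring
  have keyw : F w - F z - (w - z) • g z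
      = (∫ x : ℝ in z.re..w.re, (g (x + z.im * Complex.I) - g z))
        + Complex.I * ∫ y : ℝ in z.im..w.im, (g (w.re + y * Complex.I) - g z) := by
    rw [hkey w hwim, smul_eq_mul, hsub1, hsub2]
    linear_combination (g z) * (hw' - hz')
  have hb1 : ‖∫ x : ℝ in z.re..w.re, (g (x + z.im * Complex.I) - g z)‖
      ≤ (c/2) * |w.re - z.re| := by
    apply intervalIntegral.norm_integral_le_of_norm_le_const
    intro x hx
    have hx' := Set.mem_Ioc.mp hx
    apply hgood
    · have hlo : min z.re w.re ≤ x := le_of_lt hx'.1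
      have hhi : x ≤ max z.re w.re := hx'.2
      have : ((x:ℂ) + z.im * Complex.I).re = x := by simp
      rw [this]
      exact sq_bound hlo hhi
    · have : ((x:ℂ) + z.im * Complex.I).im = z.im := by simp
      rw [this]
      simp
      positivity
  have hb2 : ‖∫ y : ℝ in z.im..w.im, (g (w.re + y * Complex.I) - g z)‖
      ≤ (c/2) * |w.im - z.im| := by
    apply intervalIntegral.norm_integral_le_of_norm_le_const
    intro y hy
    have hy' := Set.mem_Ioc.mp hy
    apply hgood
    · have : ((w.re:ℂ) + y * Complex.I).re = w.re := by simp
      rw [this]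
    · have : ((w.re:ℂ) + y * Complex.I).im = y := by simp
      rw [this]
      exact sq_bound (le_of_lt hy'.1) hy'.2
  have hre_le : |w.re - z.re| ≤ ‖w - z‖ := by
    have := Complex.abs_re_le_norm (w - z)
    rwa [Complex.sub_re] at this
  have him_le : |w.im - z.im| ≤ ‖w - z‖ := by
    have := Complex.abs_im_le_norm (w - z)
    rwa [Complex.sub_im] at this
  calc ‖F w - F z - (w - z) • g z‖
      = ‖(∫ x : ℝ in z.re..w.re, (g (x + z.im * Complex.I) - g z))
        + Complex.I * ∫ y : ℝ in z.im..w.im, (g (w.re + y * Complex.I) - g z)‖ := by rw [keyw]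
    _ ≤ ‖∫ x : ℝ in z.re..w.re, (g (x + z.im * Complex.I) - g z)‖
        + ‖Complex.I * ∫ y : ℝ in z.im..w.im, (g (w.re + y * Complex.I) - g z)‖ := norm_add_le _ _
    _ = ‖∫ x : ℝ in z.re..w.re, (g (x + z.im * Complex.I) - g z)‖
        + ‖∫ y : ℝ in z.im..w.im, (g (w.re + y * Complex.I) - g z)‖ := by
          rw [norm_mul, Complex.norm_I, one_mul]
    _ ≤ (c/2) * |w.re - z.re| + (c/2) * |w.im - z.im| := add_le_add hb1 hb2
    _ ≤ c * ‖w - z‖ := by nlinarith [hre_le, him_le, abs_nonneg (w.re - z.re), abs_nonneg (w.im - z.im), norm_nonneg (w - z)]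

lemma seg_im_pos {a b : ℂ} (ha : 0 < a.im) (hb : 0 < b.im) {t : ℝ} (ht0 : 0 ≤ t) (ht1 : t ≤ 1) :
    0 < ((1 - (t:ℂ)) * a + (t:ℂ) * b).im := by
  have h : ((1 - (t:ℂ)) * a + (t:ℂ) * b).im = (1 - t) * a.im + t * b.im := by
    simp [Complex.add_im, Complex.mul_im, Complex.sub_re, Complex.sub_im]
  rw [h]
  rcases eq_or_lt_of_le ht1 with h1 | h1
  · subst h1; simpa using hb
  · nlinarith [mul_nonneg ht0 hb.le, mul_pos (by linarith : (0:ℝ) < 1 - t) ha]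

lemma hasDerivAt_seg (a b : ℂ) (t : ℝ) :
    HasDerivAt (fun s : ℝ => (1 - (s:ℂ)) * a + (s:ℂ) * b) (b - a) t := by
  have h : HasDerivAt (fun s : ℂ => (1 - s) * a + s * b) (b - a) (t:ℂ) := by
    have h1 := (((hasDerivAt_id (t:ℂ)).const_sub 1).mul_const a).add
      ((hasDerivAt_id (t:ℂ)).mul_const b)
    rw [show b - a = -1 * a + 1 * b by ring]
    exact h1
  exact h.comp_ofReal

lemma seg_continuous (a b : ℂ) : Continuous (fun t : ℝ => (1 - (t:ℂ)) * a + (t:ℂ) * b) := by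
  continuity

lemma lineInt_eq_sub (g F : ℂ → ℂ) (hF : ∀ z : ℂ, 0 < z.im → HasDerivAt F (g z) z)
    (hgc : ContinuousOn g {z : ℂ | 0 < z.im}) (a b : ℂ) (ha : 0 < a.im) (hb : 0 < b.im) :
    lineInt g a b = F b - F a := by
  have hmem : ∀ t : ℝ, t ∈ Set.uIcc (0:ℝ) 1 → 0 < ((1 - (t:ℂ)) * a + (t:ℂ) * b).im := by
    intro t ht
    rw [Set.uIcc_of_le (by norm_num : (0:ℝ) ≤ 1)] at ht
    exact seg_im_pos ha hb ht.1 ht.2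
  have hderiv : ∀ t ∈ Set.uIcc (0:ℝ) 1,
      HasDerivAt (fun s : ℝ => F ((1 - (s:ℂ)) * a + (s:ℂ) * b))
        ((b - a) * g ((1 - (t:ℂ)) * a + (t:ℂ) * b)) t := by
    intro t ht
    have h := (hF _ (hmem t ht)).comp t (hasDerivAt_seg a b t)
    rwa [mul_comm] at h
  have hcont : IntervalIntegrable (fun t : ℝ => (b - a) * g ((1 - (t:ℂ)) * a + (t:ℂ) * b))
      MeasureTheory.volume 0 1 := by
    apply ContinuousOn.intervalIntegrable
    apply ContinuousOn.mul continuousOn_const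
    exact hgc.comp (seg_continuous a b).continuousOn (fun t ht => hmem t ht)
  have h := intervalIntegral.integral_eq_sub_of_hasDerivAt hderiv hcont
  rw [lineInt, h]
  norm_num

lemma subst_eq (k : ℕ) (hk : 2 ≤ k) (f : ℂ → ℂ) (hfc : ContinuousOn f {z : ℂ | 0 < z.im})
    (γ : Matrix.SpecialLinearGroup (Fin 2) ℤ)
    (hfw : ∀ τ : ℂ, 0 < τ.im → f (moeb γ⁻¹ τ) = (dC γ⁻¹ τ) ^ k * f τ)
    (X : ℂ) (hX : dC γ X ≠ 0)
    (F : ℂ → ℂ) (hF : ∀ z : ℂ, 0 < z.im → HasDerivAt F (f z * (X - z) ^ (k-2)) z)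
    (A B : ℂ) (hA : 0 < A.im) (hB : 0 < B.im) :
    F (moeb γ⁻¹ B) - F (moeb γ⁻¹ A)
      = (dC γ X) ^ (k - 2) * lineInt (fun ξ => f ξ * (moeb γ X - ξ) ^ (k - 2)) A B := by
  have hmem : ∀ t : ℝ, t ∈ Set.uIcc (0:ℝ) 1 → 0 < ((1 - (t:ℂ)) * A + (t:ℂ) * B).im := by
    intro t ht
    rw [Set.uIcc_of_le (by norm_num : (0:ℝ) ≤ 1)] at ht
    exact seg_im_pos hA hB ht.1 ht.2
  have hderiv : ∀ t ∈ Set.uIcc (0:ℝ) 1,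
      HasDerivAt (fun s : ℝ => F (moeb γ⁻¹ ((1 - (s:ℂ)) * A + (s:ℂ) * B)))
        ((dC γ X) ^ (k - 2) * ((B - A) *
          (f ((1 - (t:ℂ)) * A + (t:ℂ) * B)
            * (moeb γ X - ((1 - (t:ℂ)) * A + (t:ℂ) * B)) ^ (k - 2)))) t := by
    intro t ht
    have hp : 0 < ((1 - (t:ℂ)) * A + (t:ℂ) * B).im := hmem t ht
    have h1 := hasDerivAt_moeb γ⁻¹ _ (dC_ne_zero γ⁻¹ _ hp)
    have hmp : 0 < (moeb γ⁻¹ ((1 - (t:ℂ)) * A + (t:ℂ) * B)).im := moeb_im_pos γ⁻¹ _ hp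
    have h2 := ((hF _ hmp).comp _ h1).comp t (hasDerivAt_seg A B t)
    have halg := alg_id k hk f γ X _ hX (dC_ne_zero γ⁻¹ _ hp) (hfw _ hp)
    refine HasDerivAt.congr_deriv h2 ?_
    linear_combination (B - A) * halg
  have hcont : IntervalIntegrable (fun t : ℝ => (dC γ X) ^ (k - 2) * ((B - A) *
      (f ((1 - (t:ℂ)) * A + (t:ℂ) * B)
        * (moeb γ X - ((1 - (t:ℂ)) * A + (t:ℂ) * B)) ^ (k - 2))))
      MeasureTheory.volume 0 1 := by
    apply ContinuousOn.intervalIntegrable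
    apply ContinuousOn.mul continuousOn_const
    apply ContinuousOn.mul continuousOn_const
    apply ContinuousOn.mul
    · exact hfc.comp (seg_continuous A B).continuousOn (fun t ht => hmem t ht)
    · apply Continuous.continuousOn
      continuity
  have h := intervalIntegral.integral_eq_sub_of_hasDerivAt hderiv hcont
  rw [intervalIntegral.integral_const_mul] at h
  have h0 : (1 - ((0:ℝ):ℂ)) * A + ((0:ℝ):ℂ) * B = A := by norm_num
  have h1' : (1 - ((1:ℝ):ℂ)) * A + ((1:ℝ):ℂ) * B = B := by norm_num
  rw [h0, h1'] at h
  rw [lineInt, ← h]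

end Aux

/-- For `k ≥ 2`, `f` holomorphic on `ℍ` and weight-`k` invariant under a subgroup `G` of
`SL₂(ℤ)`, the period function `p(γ)(X) = ∫_{γ⁻¹τ₀}^{τ₀} f(ξ)(X-ξ)^{k-2} dξ` satisfies
the cocycle relation `p(γ₁γ₂) = p(γ₁)|_{γ₂} + p(γ₂)` (as polynomials in `X`, i.e. away
from the pole of the fractional-linear substitution), and the cocycles attached to the two
base points `τ₀, τ₁ ∈ ℍ` differ by the coboundary `γ ↦ Q|_γ - Q` with
`Q(X) = ∫_{τ₁}^{τ₀} f(ξ)(X-ξ)^{k-2} dξ`. -/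
theorem period_cocycle_relation (k : ℕ) (hk : 2 ≤ k)
    (f : ℂ → ℂ) (hf : DifferentiableOn ℂ f {z : ℂ | 0 < z.im})
    (G : Subgroup (Matrix.SpecialLinearGroup (Fin 2) ℤ))
    (hinv : ∀ γ ∈ G, ∀ τ : ℂ, 0 < τ.im →
      f (moeb γ τ) =
        (((γ : Matrix (Fin 2) (Fin 2) ℤ) 1 0 : ℂ) * τ +
            ((γ : Matrix (Fin 2) (Fin 2) ℤ) 1 1 : ℂ)) ^ k * f τ)
    (τ₀ τ₁ : ℂ) (hτ₀ : 0 < τ₀.im) (hτ₁ : 0 < τ₁.im) :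
    (∀ γ₁ ∈ G, ∀ γ₂ ∈ G, ∀ X : ℂ,
      ((γ₂ : Matrix (Fin 2) (Fin 2) ℤ) 1 0 : ℂ) * X +
          ((γ₂ : Matrix (Fin 2) (Fin 2) ℤ) 1 1 : ℂ) ≠ 0 →
      periodCocycle k f τ₀ (γ₁ * γ₂) X =
        (((γ₂ : Matrix (Fin 2) (Fin 2) ℤ) 1 0 : ℂ) * X +
            ((γ₂ : Matrix (Fin 2) (Fin 2) ℤ) 1 1 : ℂ)) ^ (k - 2) *
          periodCocycle k f τ₀ γ₁ (moeb γ₂ X) +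
        periodCocycle k f τ₀ γ₂ X) ∧
    (∀ γ ∈ G, ∀ X : ℂ,
      ((γ : Matrix (Fin 2) (Fin 2) ℤ) 1 0 : ℂ) * X +
          ((γ : Matrix (Fin 2) (Fin 2) ℤ) 1 1 : ℂ) ≠ 0 →
      periodCocycle k f τ₁ γ X - periodCocycle k f τ₀ γ X =
        (((γ : Matrix (Fin 2) (Fin 2) ℤ) 1 0 : ℂ) * X +
            ((γ : Matrix (Fin 2) (Fin 2) ℤ) 1 1 : ℂ)) ^ (k - 2) *
          lineInt (fun ξ => f ξ * (moeb γ X - ξ) ^ (k - 2)) τ₁ τ₀ -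
        lineInt (fun ξ => f ξ * (X - ξ) ^ (k - 2)) τ₁ τ₀) := by
  have hfc : ContinuousOn f {z : ℂ | 0 < z.im} := hf.continuousOn
  have hgX : ∀ X : ℂ, DifferentiableOn ℂ (fun ξ => f ξ * (X - ξ) ^ (k - 2)) {z : ℂ | 0 < z.im} := by
    intro X
    apply hf.mul
    apply Differentiable.differentiableOn
    exact ((differentiable_const X).sub differentiable_id).pow _
  constructor
  · intro γ₁ h₁ γ₂ h₂ X hX
    have hX' : dC γ₂ X ≠ 0 := hX
    obtain ⟨F, hF⟩ := exists_primitive _ (hgX X)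
    have hfw : ∀ τ : ℂ, 0 < τ.im → f (moeb γ₂⁻¹ τ) = (dC γ₂⁻¹ τ) ^ k * f τ := by
      intro τ hτ
      exact hinv γ₂⁻¹ (inv_mem h₂) τ hτ
    have hm1 : 0 < (moeb γ₁⁻¹ τ₀).im := moeb_im_pos _ _ hτ₀
    have hm12 : 0 < (moeb (γ₁ * γ₂)⁻¹ τ₀).im := moeb_im_pos _ _ hτ₀
    have hm2 : 0 < (moeb γ₂⁻¹ τ₀).im := moeb_im_pos _ _ hτ₀
    have hsplit : moeb (γ₁ * γ₂)⁻¹ τ₀ = moeb γ₂⁻¹ (moeb γ₁⁻¹ τ₀) := by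
      rw [mul_inv_rev]
      exact moeb_mul _ _ _ hτ₀
    have e1 : periodCocycle k f τ₀ (γ₁ * γ₂) X = F τ₀ - F (moeb (γ₁ * γ₂)⁻¹ τ₀) :=
      lineInt_eq_sub _ F hF (hgX X).continuousOn _ _ hm12 hτ₀
    have e2 : periodCocycle k f τ₀ γ₂ X = F τ₀ - F (moeb γ₂⁻¹ τ₀) :=
      lineInt_eq_sub _ F hF (hgX X).continuousOn _ _ hm2 hτ₀
    have e3 := subst_eq k hk f hfc γ₂ hfw X hX' F hF (moeb γ₁⁻¹ τ₀) τ₀ hm1 hτ₀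
    have e4 : periodCocycle k f τ₀ γ₁ (moeb γ₂ X)
        = lineInt (fun ξ => f ξ * (moeb γ₂ X - ξ) ^ (k - 2)) (moeb γ₁⁻¹ τ₀) τ₀ := rfl
    have hdc : dC γ₂ X = ((γ₂ : Matrix (Fin 2) (Fin 2) ℤ) 1 0 : ℂ) * X +
        ((γ₂ : Matrix (Fin 2) (Fin 2) ℤ) 1 1 : ℂ) := rfl
    rw [e1, e2, e4, hsplit, ← hdc]
    linear_combination e3
  · intro γ hγ X hX
    have hX' : dC γ X ≠ 0 := hX
    obtain ⟨F, hF⟩ := exists_primitive _ (hgX X)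
    have hfw : ∀ τ : ℂ, 0 < τ.im → f (moeb γ⁻¹ τ) = (dC γ⁻¹ τ) ^ k * f τ := by
      intro τ hτ
      exact hinv γ⁻¹ (inv_mem hγ) τ hτ
    have hm0 : 0 < (moeb γ⁻¹ τ₀).im := moeb_im_pos _ _ hτ₀
    have hm1 : 0 < (moeb γ⁻¹ τ₁).im := moeb_im_pos _ _ hτ₁
    have e1 : periodCocycle k f τ₁ γ X = F τ₁ - F (moeb γ⁻¹ τ₁) :=
      lineInt_eq_sub _ F hF (hgX X).continuousOn _ _ hm1 hτ₁
    have e2 : periodCocycle k f τ₀ γ X = F τ₀ - F (moeb γ⁻¹ τ₀) :=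
      lineInt_eq_sub _ F hF (hgX X).continuousOn _ _ hm0 hτ₀
    have e3 := subst_eq k hk f hfc γ hfw X hX' F hF τ₁ τ₀ hτ₁ hτ₀
    have e4 : lineInt (fun ξ => f ξ * (X - ξ) ^ (k - 2)) τ₁ τ₀ = F τ₀ - F τ₁ :=
      lineInt_eq_sub _ F hF (hgX X).continuousOn _ _ hτ₁ hτ₀
    have hdc : dC γ X = ((γ : Matrix (Fin 2) (Fin 2) ℤ) 1 0 : ℂ) * X +
        ((γ : Matrix (Fin 2) (Fin 2) ℤ) 1 1 : ℂ) := rfl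
    rw [e1, e2, e4, ← hdc]
    linear_combination e3
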